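/- If π_d : O → Test (O × O) is an α-decomposition, then for every syntactic type τ, every value formula φ : Form val τ, every computation M : Cpt (U τ) (i.e. M : Tree I (Cpt τ)) and every o : O, the sequenced computation μ M satisfies obs_α o φ if and only if M satisfies the formula (π_d o)_α[φ]. -/

import Mathlib

set_option autoImplicit false

universe u v w

/-! ### Tests -/

inductive Test (A : Type u) : Type u
  | atom (a : A)
  | tru
  | fls
  | and (t₁ t₂ : Test A)
  | or (t₁ t₂ : Test A)
  | all (ts : ℕ → Test A)
  | ex (ts : ℕ → Test A)

/-- Interpretation of tests as types. -/
def liftTest {A : Type u} (P : A → Type w) : Test A → Type w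
  | .atom a => P a
  | .tru => PUnit
  | .fls => PEmpty
  | .and t₁ t₂ => liftTest P t₁ × liftTest P t₂
  | .or t₁ t₂ => liftTest P t₁ ⊕ liftTest P t₂
  | .all ts => (n : ℕ) → liftTest P (ts n)
  | .ex ts => (n : ℕ) × liftTest P (ts n)

def mapTest {A : Type u} {B : Type v} (f : A → B) : Test A → Test B
  | .atom a => .atom (f a)
  | .tru => .tru
  | .fls => .fls
  | .and t₁ t₂ => .and (mapTest f t₁) (mapTest f t₂)
  | .or t₁ t₂ => .or (mapTest f t₁) (mapTest f t₂)
  | .all ts => .all (fun n => mapTest f (ts n))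
  | .ex ts => .ex (fun n => mapTest f (ts n))

/-- The dual of a test. -/
def dualTest {A : Type u} : Test A → Test A
  | .atom a => .atom a
  | .tru => .fls
  | .fls => .tru
  | .and t₁ t₂ => .or (dualTest t₁) (dualTest t₂)
  | .or t₁ t₂ => .and (dualTest t₁) (dualTest t₂)
  | .all ts => .ex (fun n => dualTest (ts n))
  | .ex ts => .all (fun n => dualTest (ts n))

/-! ### Coinductive trees, as an M-type -/

def CTreeP (K : Type) (I : K → Type) (A : Type v) : PFunctor.{v} :=
  ⟨A ⊕ ULift.{v} K, Sum.elim (fun _ => PEmpty.{v+1}) (fun k => ULift.{v} (I k.down))⟩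

/-- Coinductive trees with `A`-labelled leaves and `K`-labelled nodes of arity `I k`. -/
def CTree (K : Type) (I : K → Type) (A : Type v) : Type v := (CTreeP K I A).M

namespace CTree

variable {K : Type} {I : K → Type} {A : Type v}

def leaf (a : A) : CTree K I A :=
  PFunctor.M.mk ⟨Sum.inl a, fun e => e.elim⟩

def node (k : K) (ts : I k → CTree K I A) : CTree K I A :=
  PFunctor.M.mk ⟨Sum.inr ⟨k⟩, fun i => ts i.down⟩

/-- Monad multiplication on trees: `mu (leaf t) = t`, `mu (node k ts) = node k (mu ∘ ts)`. -/
def mu (d : CTree K I (CTree K I A)) : CTree K I A :=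
  PFunctor.M.corec
    (fun (s : CTree K I (CTree K I A) ⊕ CTree K I A) =>
      match s with
      | Sum.inl d' =>
          match PFunctor.M.dest d' with
          | ⟨Sum.inl t, _⟩ =>
              (match PFunctor.M.dest t with
              | ⟨Sum.inl a, _⟩ => ⟨Sum.inl a, fun e => e.elim⟩
              | ⟨Sum.inr k, ts⟩ => ⟨Sum.inr k, fun i => Sum.inr (ts i)⟩)
          | ⟨Sum.inr k, ds⟩ => ⟨Sum.inr k, fun i => Sum.inl (ds i)⟩
      | Sum.inr t =>
          match PFunctor.M.dest t with
          | ⟨Sum.inl a, _⟩ => ⟨Sum.inl a, fun e => e.elim⟩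
          | ⟨Sum.inr k, ts⟩ => ⟨Sum.inr k, fun i => Sum.inr (ts i)⟩)
    (Sum.inl d)

end CTree
/-! ### The inductive predicate lifting α -/

section PredLift

variable {K : Type} {I : K → Type} {O : Type}

mutual
  /-- The inductive algebra `α`, parametrized directly by the leaf predicate `P`:
      `Alpha πl πn P o t` corresponds to `α o (mapTree P t)` in the paper. -/
  inductive Alpha {K : Type} {I : K → Type} {O : Type}
      (πl : O → Bool) (πn : (k : K) → O → Test (I k × O))
      {A : Type v} (P : A → Type w) : O → CTree K I A → Type (max v w)
    | leaf {o : O} {a : A} (b : πl o = true) (p : P a) :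
        Alpha πl πn P o (CTree.leaf a)
    | node {o : O} {k : K} {Ps : I k → CTree K I A}
        (ps : AlphaT πl πn P (πn k o) Ps) :
        Alpha πl πn P o (CTree.node k Ps)

  /-- Inductive presentation of `liftTest (fun (x, o') => Alpha πl πn P o' (Ps x)) s`. -/
  inductive AlphaT {K : Type} {I : K → Type} {O : Type}
      (πl : O → Bool) (πn : (k : K) → O → Test (I k × O))
      {A : Type v} (P : A → Type w) :
      {k : K} → Test (I k × O) → (I k → CTree K I A) → Type (max v w)
    | atom {k : K} {x : I k} {o : O} {Ps : I k → CTree K I A}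
        (p : Alpha πl πn P o (Ps x)) : AlphaT πl πn P (.atom (x, o)) Ps
    | tru {k : K} {Ps : I k → CTree K I A} : AlphaT πl πn P .tru Ps
    | and {k : K} {t₁ t₂ : Test (I k × O)} {Ps : I k → CTree K I A}
        (p₁ : AlphaT πl πn P t₁ Ps) (p₂ : AlphaT πl πn P t₂ Ps) :
        AlphaT πl πn P (.and t₁ t₂) Ps
    | orl {k : K} {t₁ t₂ : Test (I k × O)} {Ps : I k → CTree K I A}
        (p : AlphaT πl πn P t₁ Ps) : AlphaT πl πn P (.or t₁ t₂) Ps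
    | orr {k : K} {t₁ t₂ : Test (I k × O)} {Ps : I k → CTree K I A}
        (p : AlphaT πl πn P t₂ Ps) : AlphaT πl πn P (.or t₁ t₂) Ps
    | all {k : K} {ts : ℕ → Test (I k × O)} {Ps : I k → CTree K I A}
        (ps : (n : ℕ) → AlphaT πl πn P (ts n) Ps) : AlphaT πl πn P (.all ts) Ps
    | ex {k : K} {ts : ℕ → Test (I k × O)} {Ps : I k → CTree K I A}
        (n : ℕ) (p : AlphaT πl πn P (ts n) Ps) : AlphaT πl πn P (.ex ts) Ps
end

/-- The inductive `O`-indexed predicate lifting. -/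
def liftTree (πl : O → Bool) (πn : (k : K) → O → Test (I k × O))
    (o : O) {A : Type v} (P : A → Type w) (t : CTree K I A) : Type (max v w) :=
  Alpha πl πn P o t

/-! ### The coinductive predicate lifting β, encoded as an M-type of raw proof
trees carrying a (coinductively defined) well-formedness invariant. -/

/-- Selections through a test: the container shapes of `liftTest`. -/
inductive Sel {X : Type} : Test X → Type
  | atom (x : X) : Sel (.atom x)
  | tru : Sel .tru
  | and {t₁ t₂ : Test X} (c₁ : Sel t₁) (c₂ : Sel t₂) : Sel (.and t₁ t₂)
  | orl {t₁ t₂ : Test X} (c : Sel t₁) : Sel (.or t₁ t₂)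
  | orr {t₁ t₂ : Test X} (c : Sel t₂) : Sel (.or t₁ t₂)
  | all {ts : ℕ → Test X} (cs : (n : ℕ) → Sel (ts n)) : Sel (.all ts)
  | ex {ts : ℕ → Test X} (n : ℕ) (c : Sel (ts n)) : Sel (.ex ts)

/-- The atoms reached by a selection, with their labels:
`liftTest Q s ≃ Σ c : Sel s, ∀ x, Sel.At c x → Q x`. -/
inductive Sel.At {X : Type} : {s : Test X} → Sel s → X → Type
  | atom (x : X) : Sel.At (.atom x) x
  | andl {t₁ t₂ : Test X} {c₁ : Sel t₁} {c₂ : Sel t₂} {x : X}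
      (h : Sel.At c₁ x) : Sel.At (.and c₁ c₂) x
  | andr {t₁ t₂ : Test X} {c₁ : Sel t₁} {c₂ : Sel t₂} {x : X}
      (h : Sel.At c₂ x) : Sel.At (.and c₁ c₂) x
  | orl {t₁ t₂ : Test X} {c : Sel t₁} {x : X}
      (h : Sel.At c x) : Sel.At (.orl (t₂ := t₂) c) x
  | orr {t₁ t₂ : Test X} {c : Sel t₂} {x : X}
      (h : Sel.At c x) : Sel.At (.orr (t₁ := t₁) c) x
  | all {ts : ℕ → Test X} {cs : (n : ℕ) → Sel (ts n)} (n : ℕ) {x : X}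
      (h : Sel.At (cs n) x) : Sel.At (.all cs) x
  | ex {ts : ℕ → Test X} {n : ℕ} {c : Sel (ts n)} {x : X}
      (h : Sel.At c x) : Sel.At (.ex n c) x

variable (πl : O → Bool) (πn : (k : K) → O → Test (I k × O))

/-- Shapes of raw proof trees for the coinductive lifting specified by `(πl, πn)`:
either leaf evidence (a proof of the leaf predicate, or evidence that the
observation is not correct for termination), or a selection through the test
at a node. -/
def BetaShape {A : Type v} (P : A → Type w) : Type (max v w) :=
  (Σ' (o : O) (a : A), PSum (P a) (πl o = false)) ⊕ (Σ' (k : K) (o : O), Sel (πn k o))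

end PredLift
section Beta

variable {K : Type} {I : K → Type} {O : Type}
variable (πl : O → Bool) (πn : (k : K) → O → Test (I k × O))

/-- The polynomial functor of raw proof trees for the coinductive lifting. -/
def BetaPF {A : Type v} (P : A → Type w) : PFunctor.{max v w} :=
  ⟨BetaShape πl πn P,
   Sum.elim (fun _ => PEmpty.{(max v w)+1})
     (fun s => ULift.{max v w} ((x : I s.1 × O) × Sel.At s.2.2 x))⟩

/-- Raw (coinductive) proof trees for the coinductive lifting. -/
def BetaPf {A : Type v} (P : A → Type w) : Type (max v w) := (BetaPF πl πn P).M

/-- One step of well-formedness of a raw proof tree with respect to an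
observation and a tree. -/
def BetaWFStep {A : Type v} (P : A → Type w)
    (R : BetaPf πl πn P → O → CTree K I A → Prop)
    (pf : BetaPf πl πn P) (o : O) (t : CTree K I A) : Prop :=
  match PFunctor.M.dest pf, PFunctor.M.dest t with
  | ⟨Sum.inl ⟨o', a', _⟩, _⟩, ⟨Sum.inl a, _⟩ => o' = o ∧ a' = a
  | ⟨Sum.inr ⟨k', o', c⟩, ch⟩, ⟨Sum.inr k, ts⟩ =>
      o' = o ∧ ∃ h : k' = k.down,
        ∀ (x : I k' × O) (hx : Sel.At c x),
          R (ch ⟨⟨x, hx⟩⟩) x.2 (ts ⟨h ▸ x.1⟩)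
  | _, _ => False

/-- Well-formedness (the coinductive component of `β`), as a greatest fixed
point: an invariant closed under one-step unfolding. -/
def BetaWF {A : Type v} (P : A → Type w)
    (pf : BetaPf πl πn P) (o : O) (t : CTree K I A) : Prop :=
  ∃ R : BetaPf πl πn P → O → CTree K I A → Prop,
    (∀ pf o t, R pf o t → BetaWFStep πl πn P R pf o t) ∧ R pf o t

/-- The coinductive algebra `β` specified by `(πl, πn)`, parametrized directly
by the leaf predicate `P`: `Beta πl πn P o t` corresponds to
`β o (mapTree P t)` in the paper. -/
def Beta {A : Type v} (P : A → Type w) (o : O) (t : CTree K I A) : Type (max v w) :=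
  Σ' pf : BetaPf πl πn P, BetaWF πl πn P pf o t

/-- The coinductive `O`-indexed predicate lifting, forming a complementing
pair with `liftTree`: it is specified by `πl` and the dual of `πn`. -/
def coliftTree (o : O) {A : Type v} (P : A → Type w) (t : CTree K I A) : Type (max v w) :=
  Beta πl (fun k o' => dualTest (πn k o')) P o t

end Beta
section Gamma

variable {K : Type} {I : K → Type} {O : Type}

/-- `R`-correctness of a predicate. -/
def RCorrect {A : Type v} (R : A → A → Type u) (f : A → Type) : Type (max v u) :=
  ∀ a b, f a → R a b → f b

variable (πl : O → Bool) (πn : (k : K) → O → Test (I k × O))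

/-- The relation lifting `Γ`. -/
def Gamma {A : Type v} (R : A → A → Type u) (t₀ t₁ : CTree K I A) : Type (max v u 1) :=
  ∀ (f : A → Type), RCorrect R f → ∀ o : O,
    (liftTree πl πn o f t₀ → liftTree πl πn o f t₁) ×
    (coliftTree πl πn o f t₀ → coliftTree πl πn o f t₁)

end Gamma

section Lang

variable (K : Type) (I : K → Type) (O : Type)

inductive Ty : Type
  | nat
  | arrow (σ ρ : Ty)
  | prod (σ ρ : Ty)
  | u (σ : Ty)

def Val : Ty → Type
  | .nat => ℕ
  | .arrow σ ρ => Val σ → CTree K I (Val ρ)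
  | .prod σ ρ => Val σ × Val ρ
  | .u σ => CTree K I (Val σ)

def Cpt (σ : Ty) : Type := CTree K I (Val K I σ)

inductive Srt : Type
  | val
  | cpt

def Tm : Srt → Ty → Type
  | .val, σ => Val K I σ
  | .cpt, σ => Cpt K I σ

mutual
  /-- Behavioural formulae. -/
  inductive Form : Srt → Ty → Type
    | eq (n : ℕ) : Form .val .nat
    | neq (n : ℕ) : Form .val .nat
    | mapsto {σ ρ : Ty} (V : Val K I σ) (φ : Form .cpt ρ) : Form .val (.arrow σ ρ)
    | fst {σ ρ : Ty} (φ : Form .val σ) : Form .val (.prod σ ρ)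
    | snd {σ ρ : Ty} (φ : Form .val ρ) : Form .val (.prod σ ρ)
    | thunk {σ : Ty} (φ : Form .cpt σ) : Form .val (.u σ)
    | test {b : Srt} {σ : Ty} (φs : FTest b σ) : Form b σ
    | obsA {σ : Ty} (o : O) (φ : Form .val σ) : Form .cpt σ
    | obsB {σ : Ty} (o : O) (φ : Form .val σ) : Form .cpt σ

  /-- Tests of formulae: the grammar `Test` instantiated at `Form b σ`
  (inlined, as Lean does not accept the nested occurrence). -/
  inductive FTest : Srt → Ty → Type
    | atom {b : Srt} {σ : Ty} (φ : Form b σ) : FTest b σ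
    | tru {b : Srt} {σ : Ty} : FTest b σ
    | fls {b : Srt} {σ : Ty} : FTest b σ
    | and {b : Srt} {σ : Ty} (t₁ t₂ : FTest b σ) : FTest b σ
    | or {b : Srt} {σ : Ty} (t₁ t₂ : FTest b σ) : FTest b σ
    | all {b : Srt} {σ : Ty} (ts : ℕ → FTest b σ) : FTest b σ
    | ex {b : Srt} {σ : Ty} (ts : ℕ → FTest b σ) : FTest b σ
end

end Lang

section Neg

variable {K : Type} {I : K → Type} {O : Type}

/-- `FTest b σ` realizes `Test (Form b σ)`. -/
def toFTest {b : Srt} {σ : Ty} : Test (Form K I O b σ) → FTest K I O b σ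
  | .atom φ => .atom φ
  | .tru => .tru
  | .fls => .fls
  | .and t₁ t₂ => .and (toFTest t₁) (toFTest t₂)
  | .or t₁ t₂ => .or (toFTest t₁) (toFTest t₂)
  | .all ts => .all (fun n => toFTest (ts n))
  | .ex ts => .ex (fun n => toFTest (ts n))

/-- The formula `test φs` for a test of formulae `φs : Test (Form b σ)`. -/
def Form.mkTest {b : Srt} {σ : Ty} (φs : Test (Form K I O b σ)) : Form K I O b σ :=
  .test (toFTest φs)

mutual
  /-- Negation of formulae. -/
  def negFma : {b : Srt} → {σ : Ty} → Form K I O b σ → Form K I O b σ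
    | _, _, .eq n => .neq n
    | _, _, .neq n => .eq n
    | _, _, .mapsto V φ => .mapsto V (negFma φ)
    | _, _, .fst φ => .fst (negFma φ)
    | _, _, .snd φ => .snd (negFma φ)
    | _, _, .thunk φ => .thunk (negFma φ)
    | _, _, .test φs => .test (negFTest φs)
    | _, _, .obsA o φ => .obsB o (negFma φ)
    | _, _, .obsB o φ => .obsA o (negFma φ)

  /-- The action of `mapTest negFma` on tests of formulae. -/
  def negFTest : {b : Srt} → {σ : Ty} → FTest K I O b σ → FTest K I O b σ
    | _, _, .atom φ => .atom (negFma φ)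
    | _, _, .tru => .tru
    | _, _, .fls => .fls
    | _, _, .and t₁ t₂ => .and (negFTest t₁) (negFTest t₂)
    | _, _, .or t₁ t₂ => .or (negFTest t₁) (negFTest t₂)
    | _, _, .all ts => .all (fun n => negFTest (ts n))
    | _, _, .ex ts => .ex (fun n => negFTest (ts n))
end

end Neg
section Sat

variable {K : Type} {I : K → Type} {O : Type}
variable (πl : O → Bool) (πn : (k : K) → O → Test (I k × O))

mutual
  /-- Satisfaction of formulae by terms: `Sat πl πn φ P` is `P ⊨ φ`. -/
  def Sat : {b : Srt} → {σ : Ty} → Form K I O b σ → Tm K I b σ → Type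
    | _, _, .eq n, m => PLift (m = n)
    | _, _, .neq n, m => PLift (m ≠ n)
    | _, _, .mapsto V φ, W => Sat φ (W V)
    | _, _, .fst φ, p => Sat φ p.1
    | _, _, .snd φ, p => Sat φ p.2
    | _, _, .thunk φ, V => Sat (b := .cpt) φ V
    | _, _, .test φs, P => SatTest φs P
    | _, _, .obsA o φ, M => liftTree πl πn o (fun V => Sat φ V) M
    | _, _, .obsB o φ, M => coliftTree πl πn o (fun V => Sat φ V) M

  /-- Satisfaction of tests of formulae: realizes `liftTest (fun φ => Sat πl πn φ P) φs`. -/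
  def SatTest : {b : Srt} → {σ : Ty} → FTest K I O b σ → Tm K I b σ → Type
    | _, _, .atom φ, P => Sat φ P
    | _, _, .tru, _ => PUnit
    | _, _, .fls, _ => PEmpty
    | _, _, .and t₁ t₂, P => SatTest t₁ P × SatTest t₂ P
    | _, _, .or t₁ t₂, P => SatTest t₁ P ⊕ SatTest t₂ P
    | _, _, .all ts, P => (n : ℕ) → SatTest (ts n) P
    | _, _, .ex ts, P => (n : ℕ) × SatTest (ts n) P
end

end Sat
section Decomp

variable {K : Type} {I : K → Type} {O : Type}
variable (πl : O → Bool) (πn : (k : K) → O → Test (I k × O))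

/-- The algebra `α` on trees of types. -/
def algA (o : O) (t : CTree K I Type) : Type 1 :=
  Alpha πl πn (fun X => X) o t

/-- The algebra `β` on trees of types (as part of the complementing pair, it
is specified by `πl` and the dual of `πn`). -/
def algB (o : O) (t : CTree K I Type) : Type 1 :=
  coliftTree πl πn o (fun X => X) t

/-- The extensional order `⊑` on double trees. -/
def DTLe (d₀ d₁ : CTree K I (CTree K I Type)) : Type 1 :=
  ∀ o₀ o₁ : O,
    (liftTree πl πn o₀ (algA πl πn o₁) d₀ → liftTree πl πn o₀ (algA πl πn o₁) d₁) ×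
    (coliftTree πl πn o₀ (algB πl πn o₁) d₀ → coliftTree πl πn o₀ (algB πl πn o₁) d₁)

/-- The extensional order `⊑` on single trees. -/
def STLe (t₀ t₁ : CTree K I Type) : Type 1 :=
  ∀ o : O, (algA πl πn o t₀ → algA πl πn o t₁) × (algB πl πn o t₀ → algB πl πn o t₁)

/-- Strong decomposability of `(O, πl, πn)`. -/
def StronglyDecomposable : Type 1 :=
  ∀ d₀ d₁ : CTree K I (CTree K I Type),
    DTLe πl πn d₀ d₁ → STLe πl πn (CTree.mu d₀) (CTree.mu d₁)

/-- `πd` is an `α`-decomposition. -/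
def IsAlphaDecomposition (πd : O → Test (O × O)) : Type 1 :=
  ∀ (d : CTree K I (CTree K I Type)) (o : O),
    (algA πl πn o (CTree.mu d) →
      liftTest (fun p => liftTree πl πn p.1 (algA πl πn p.2) d) (πd o)) ×
    (liftTest (fun p => liftTree πl πn p.1 (algA πl πn p.2) d) (πd o) →
      algA πl πn o (CTree.mu d))

/-- `πd` is a `β`-decomposition. -/
def IsBetaDecomposition (πd : O → Test (O × O)) : Type 1 :=
  ∀ (d : CTree K I (CTree K I Type)) (o : O),
    (algB πl πn o (CTree.mu d) →
      liftTest (fun p => coliftTree πl πn p.1 (algB πl πn p.2) d) (πd o)) ×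
    (liftTest (fun p => coliftTree πl πn p.1 (algB πl πn p.2) d) (πd o) →
      algB πl πn o (CTree.mu d))

/-- The formula `(πd o)_α[φ]`. -/
def decompFormA (πd : O → Test (O × O)) (o : O) {τ : Ty} (φ : Form K I O .val τ) :
    Form K I O .cpt (.u τ) :=
  Form.mkTest (mapTest (fun p => .obsA p.1 (.thunk (.obsA p.2 φ))) (πd o))

/-- The formula `(πd o)_β[φ]`. -/
def decompFormB (πd : O → Test (O × O)) (o : O) {τ : Ty} (φ : Form K I O .val τ) :
    Form K I O .cpt (.u τ) :=
  Form.mkTest (mapTest (fun p => .obsB p.1 (.thunk (.obsB p.2 φ))) (πd o))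

end Decomp

section Sim

variable {K : Type} {I : K → Type} {O : Type}
variable (πl : O → Bool) (πn : (k : K) → O → Test (I k × O))

/-- Well-typed relations on terms. -/
def WtRel (K : Type) (I : K → Type) : Type 1 :=
  (b : Srt) → (τ : Ty) → Tm K I b τ → Tm K I b τ → Type

/-- Applicative `Γ`-simulations. -/
structure IsSimulation (R : WtRel K I) : Type 1 where
  natCond : ∀ n m : Tm K I .val .nat, R .val .nat n m → n = m
  arrowCond : ∀ {σ τ : Ty} (V W : Tm K I .val (.arrow σ τ)),
    R .val (.arrow σ τ) V W → ∀ U : Val K I σ, R .cpt τ (V U) (W U)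
  prodCond : ∀ {σ τ : Ty} (V W : Tm K I .val (.prod σ τ)),
    R .val (.prod σ τ) V W → R .val σ V.1 W.1 × R .val τ V.2 W.2
  thunkCond : ∀ {σ : Ty} (V W : Tm K I .val (.u σ)),
    R .val (.u σ) V W → R .cpt σ V W
  cptCond : ∀ {τ : Ty} (M N : Tm K I .cpt τ),
    R .cpt τ M N → Gamma πl πn (R .val τ) M N

/-- Applicative `Γ`-similarity. -/
def AppSimilar {b : Srt} {τ : Ty} (P Q : Tm K I b τ) : Type 1 :=
  Σ R : WtRel K I, IsSimulation πl πn R × R b τ P Q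

/-- Applicative `Γ`-bisimilarity. -/
def Bisimilar {b : Srt} {τ : Ty} (P Q : Tm K I b τ) : Type 1 :=
  Σ R : WtRel K I,
    IsSimulation πl πn R × (∀ b τ P Q, R b τ P Q → R b τ Q P) × R b τ P Q

end Sim

/-- Reflexive-transitive closure of a `Type`-valued relation. -/
inductive RTC {A : Type u} (R : A → A → Type u) : A → A → Type u
  | refl (a : A) : RTC R a a
  | tail {a b c : A} (h : RTC R a b) (h' : R b c) : RTC R a c

/-! ### Auxiliary development for Statement 7 -/

noncomputable section AuxProof

open PFunctor

variable {K : Type} {I : K → Type} {O : Type}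

theorem dest_inj' {P : PFunctor.{u}} {x y : P.M} (h : M.dest x = M.dest y) : x = y := by
  rw [← M.mk_dest x, ← M.mk_dest y, h]

theorem dest_leaf {A : Type v} (a : A) :
    M.dest (CTree.leaf (K := K) (I := I) a) = ⟨Sum.inl a, fun e => e.elim⟩ :=
  M.dest_mk _

theorem dest_node {A : Type v} (k : K) (ts : I k → CTree K I A) :
    M.dest (CTree.node k ts) = ⟨Sum.inr ⟨k⟩, fun i => ts i.down⟩ :=
  M.dest_mk _

theorem ctree_cases {A : Type v} (t : CTree K I A) :
    (∃ a, t = CTree.leaf (K := K) (I := I) a) ∨ ∃ k ts, t = CTree.node k ts := by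
  rcases hd : M.dest t with ⟨a | k, g⟩
  · left
    refine ⟨a, ?_⟩
    rw [← M.mk_dest t, hd]
    have : g = fun e => e.elim := funext fun e => e.elim
    rw [this]; rfl
  · right
    refine ⟨k.down, fun i => g ⟨i⟩, ?_⟩
    rw [← M.mk_dest t, hd]
    rfl

theorem leaf_inj {A : Type v} {a b : A}
    (h : CTree.leaf (K := K) (I := I) a = CTree.leaf b) : a = b := by
  have h2 := congrArg (fun t => (M.dest t).1) h
  simp only [dest_leaf] at h2
  exact Sum.inl.inj h2

theorem leaf_ne_node {A : Type v} {a : A} {k : K} {ts : I k → CTree K I A}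
    (h : CTree.leaf a = CTree.node k ts) : False := by
  have h2 := congrArg (fun t => (M.dest t).1) h
  simp [dest_leaf, dest_node] at h2

theorem node_inj {A : Type v} {k k' : K} {ts : I k → CTree K I A} {ts' : I k' → CTree K I A}
    (h : CTree.node k ts = CTree.node k' ts') :
    ∃ e : k = k', ∀ i, ts i = ts' (e ▸ i) := by
  have h2 := congrArg M.dest h
  rw [dest_node, dest_node] at h2
  obtain ⟨h3, h4⟩ := Sigma.mk.inj_iff.mp h2
  have hk : k = k' := congrArg ULift.down (Sum.inr.inj h3)
  subst hk
  refine ⟨rfl, fun i => ?_⟩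
  have h5 : (fun i : ULift (I k) => ts i.down) = fun i => ts' i.down := eq_of_heq h4
  exact congrFun h5 ⟨i⟩

/-- One step of the functorial map on coinductive trees. -/
def cmapF {A : Type} {B : Type v} (f : A → B) (t : CTree K I A) :
    (CTreeP K I B) (CTree K I A) :=
  match M.dest t with
  | ⟨Sum.inl a, _⟩ => ⟨Sum.inl (f a), fun e => e.elim⟩
  | ⟨Sum.inr k, ts⟩ => ⟨Sum.inr ⟨k.down⟩, fun i => ts ⟨i.down⟩⟩

/-- Functorial map on coinductive trees. -/
def cmap {A : Type} {B : Type v} (f : A → B) (t : CTree K I A) : CTree K I B :=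
  M.corec (cmapF f) t

theorem cmap_leaf {A : Type} {B : Type v} (f : A → B) (a : A) :
    cmap (K := K) (I := I) f (CTree.leaf a) = CTree.leaf (f a) := by
  apply dest_inj'
  rw [cmap, M.dest_corec, dest_leaf]
  simp only [cmapF, dest_leaf]
  erw [PFunctor.map_eq]
  congr
  funext e
  exact e.elim

theorem cmap_node {A : Type} {B : Type v} (f : A → B) (k : K) (ts : I k → CTree K I A) :
    cmap (K := K) (I := I) f (CTree.node k ts) = CTree.node k fun i => cmap f (ts i) := by
  apply dest_inj'
  rw [cmap, M.dest_corec, dest_node]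
  simp only [cmapF, dest_node]
  erw [PFunctor.map_eq]
  rfl
/-- The corecursion step function of `CTree.mu`. -/
def muF {A : Type v} (s : CTree K I (CTree K I A) ⊕ CTree K I A) :
    (CTreeP K I A) (CTree K I (CTree K I A) ⊕ CTree K I A) :=
  match s with
  | Sum.inl d' =>
      match M.dest d' with
      | ⟨Sum.inl t, _⟩ =>
          (match M.dest t with
          | ⟨Sum.inl a, _⟩ => ⟨Sum.inl a, fun e => e.elim⟩
          | ⟨Sum.inr k, ts⟩ => ⟨Sum.inr k, fun i => Sum.inr (ts i)⟩)
      | ⟨Sum.inr k, ds⟩ => ⟨Sum.inr k, fun i => Sum.inl (ds i)⟩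
  | Sum.inr t =>
      match M.dest t with
      | ⟨Sum.inl a, _⟩ => ⟨Sum.inl a, fun e => e.elim⟩
      | ⟨Sum.inr k, ts⟩ => ⟨Sum.inr k, fun i => Sum.inr (ts i)⟩

theorem mu_eq {A : Type v} (d : CTree K I (CTree K I A)) :
    CTree.mu d = M.corec muF (Sum.inl d) := rfl

/-- The copy of a tree by the corecursor of `CTree.mu`. -/
def copy {A : Type v} (t : CTree K I A) : CTree K I A :=
  M.corec muF (Sum.inr t)

theorem muF_inl_leaf {A : Type v} (t : CTree K I A) :
    muF (K := K) (I := I) (Sum.inl (CTree.leaf t)) = muF (Sum.inr t) := by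
  simp only [muF, dest_leaf]

theorem dest_copy_leaf {A : Type v} (a : A) :
    M.dest (copy (K := K) (I := I) (CTree.leaf a)) =
      ⟨Sum.inl a, fun e => M.corec (muF (K := K) (I := I) (A := A)) (PEmpty.elim e)⟩ := by
  rw [copy, M.dest_corec]
  simp only [muF, dest_leaf]
  erw [PFunctor.map_eq]
  rfl

theorem dest_copy_node {A : Type v} (k : K) (ts : I k → CTree K I A) :
    M.dest (copy (CTree.node k ts)) = ⟨Sum.inr ⟨k⟩, fun i => copy (ts i.down)⟩ := by
  rw [copy, M.dest_corec]
  simp only [muF, dest_node]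
  erw [PFunctor.map_eq]
  rfl

theorem copy_eq {A : Type v} (t : CTree K I A) : copy (K := K) (I := I) t = t := by
  apply M.bisim (fun x y => x = copy y)
  · intro x y hxy
    subst hxy
    rcases ctree_cases y with ⟨a, rfl⟩ | ⟨k, ts, rfl⟩
    · exact ⟨Sum.inl a, _, _, dest_copy_leaf a, dest_leaf a, fun e => PEmpty.elim e⟩
    · exact ⟨Sum.inr ⟨k⟩, _, _, dest_copy_node k ts, dest_node k ts, fun i => rfl⟩
  · rfl

theorem mu_leaf {A : Type v} (t : CTree K I A) : CTree.mu (CTree.leaf t) = t := by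
  conv_rhs => rw [← copy_eq t]
  apply dest_inj'
  rw [mu_eq, M.dest_corec, copy, M.dest_corec, muF_inl_leaf]

theorem mu_node {A : Type v} (k : K) (ds : I k → CTree K I (CTree K I A)) :
    CTree.mu (CTree.node k ds) = CTree.node k fun i => CTree.mu (ds i) := by
  apply dest_inj'
  rw [mu_eq, M.dest_corec, dest_node]
  simp only [muF, dest_node]
  erw [PFunctor.map_eq]
  rfl
theorem mu_cmap {A : Type} {B : Type v} (f : A → B) (d : CTree K I (CTree K I A)) :
    CTree.mu (cmap (cmap f) d) = cmap f (CTree.mu d) := by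
  apply M.bisim
    (fun x y => x = y ∨ ∃ d, x = CTree.mu (cmap (cmap f) d) ∧ y = cmap f (CTree.mu d))
  · intro x y hxy
    rcases hxy with rfl | ⟨d, rfl, rfl⟩
    · exact ⟨(M.dest x).1, (M.dest x).2, (M.dest x).2, rfl, rfl, fun i => Or.inl rfl⟩
    · rcases ctree_cases d with ⟨t, rfl⟩ | ⟨k, ds, rfl⟩
      · have he : CTree.mu (cmap (cmap f) (CTree.leaf t)) = cmap f (CTree.mu (CTree.leaf t)) := by
          rw [cmap_leaf, mu_leaf, mu_leaf]
        rw [he]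
        exact ⟨_, _, _, rfl, rfl, fun i => Or.inl rfl⟩
      · have hx : CTree.mu (cmap (cmap f) (CTree.node k ds)) =
            CTree.node k fun i => CTree.mu (cmap (cmap f) (ds i)) := by
          rw [cmap_node, mu_node]
        have hy : cmap f (CTree.mu (CTree.node k ds)) =
            CTree.node k fun i => cmap f (CTree.mu (ds i)) := by
          rw [mu_node, cmap_node]
        rw [hx, hy]
        exact ⟨Sum.inr ⟨k⟩, _, _, dest_node _ _, dest_node _ _,
          fun i => Or.inr ⟨ds i.down, rfl, rfl⟩⟩
  · exact Or.inr ⟨d, rfl, rfl⟩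
universe w₂

mutual
theorem alphaTo {πl : O → Bool} {πn : (k : K) → O → Test (I k × O)}
    {A : Type} {B : Type v} (f : A → B) {P : A → Type w} {Q : B → Type w₂}
    (conv : ∀ a, P a → Nonempty (Q (f a))) :
    ∀ {o : O} {t : CTree K I A},
      Alpha πl πn P o t → Nonempty (Alpha πl πn Q o (cmap f t))
  | o, _, .leaf hb p => by
      rw [cmap_leaf]
      exact (conv _ p).elim fun q => ⟨.leaf hb q⟩
  | o, _, .node ps => by
      rw [cmap_node]
      exact (alphaTTo f conv ps).elim fun qs => ⟨.node qs⟩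

theorem alphaTTo {πl : O → Bool} {πn : (k : K) → O → Test (I k × O)}
    {A : Type} {B : Type v} (f : A → B) {P : A → Type w} {Q : B → Type w₂}
    (conv : ∀ a, P a → Nonempty (Q (f a))) :
    ∀ {k : K} {s : Test (I k × O)} {Ps : I k → CTree K I A},
      AlphaT πl πn P s Ps → Nonempty (AlphaT πl πn Q s fun i => cmap f (Ps i))
  | _, _, _, .atom p => (alphaTo f conv p).elim fun q => ⟨.atom q⟩
  | _, _, _, .tru => ⟨.tru⟩
  | _, _, _, .and p₁ p₂ =>
      (alphaTTo f conv p₁).elim fun q₁ => (alphaTTo f conv p₂).elim fun q₂ => ⟨.and q₁ q₂⟩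
  | _, _, _, .orl p => (alphaTTo f conv p).elim fun q => ⟨.orl q⟩
  | _, _, _, .orr p => (alphaTTo f conv p).elim fun q => ⟨.orr q⟩
  | _, _, _, .all ps => ⟨.all fun n => Classical.choice (alphaTTo f conv (ps n))⟩
  | _, _, _, .ex n p => (alphaTTo f conv p).elim fun q => ⟨.ex n q⟩
end
mutual
theorem alphaFrom {πl : O → Bool} {πn : (k : K) → O → Test (I k × O)}
    {A : Type} {B : Type v} (f : A → B) {P : A → Type w} {Q : B → Type w₂}
    (conv : ∀ a, Q (f a) → Nonempty (P a)) :
    ∀ {o : O} {s : CTree K I B} {t : CTree K I A},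
      s = cmap f t → Alpha πl πn Q o s → Nonempty (Alpha πl πn P o t)
  | o, _, t, ht, .leaf hb q => by
      rcases ctree_cases t with ⟨a, rfl⟩ | ⟨k, ts, rfl⟩
      · rw [cmap_leaf] at ht
        obtain rfl := leaf_inj ht
        exact (conv _ q).elim fun p => ⟨.leaf hb p⟩
      · rw [cmap_node] at ht
        exact absurd ht (fun hh => leaf_ne_node hh)
  | o, _, t, ht, .node qs => by
      rcases ctree_cases t with ⟨a, rfl⟩ | ⟨k, ts, rfl⟩
      · rw [cmap_leaf] at ht
        exact absurd ht.symm (fun hh => leaf_ne_node hh)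
      · rw [cmap_node] at ht
        obtain ⟨rfl, hts⟩ := node_inj ht
        exact (alphaTFrom f conv (fun i => (hts i).symm) qs).elim fun ps => ⟨.node ps⟩

theorem alphaTFrom {πl : O → Bool} {πn : (k : K) → O → Test (I k × O)}
    {A : Type} {B : Type v} (f : A → B) {P : A → Type w} {Q : B → Type w₂}
    (conv : ∀ a, Q (f a) → Nonempty (P a)) :
    ∀ {k : K} {s : Test (I k × O)} {Ps : I k → CTree K I B} {ts : I k → CTree K I A},
      (∀ i, cmap f (ts i) = Ps i) → AlphaT πl πn Q s Ps → Nonempty (AlphaT πl πn P s ts)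
  | _, _, _, _, hts, .atom (x := x) q =>
      (alphaFrom f conv (hts x).symm q).elim fun p => ⟨.atom p⟩
  | _, _, _, _, _, .tru => ⟨.tru⟩
  | _, _, _, _, hts, .and q₁ q₂ =>
      (alphaTFrom f conv hts q₁).elim fun p₁ =>
        (alphaTFrom f conv hts q₂).elim fun p₂ => ⟨.and p₁ p₂⟩
  | _, _, _, _, hts, .orl q => (alphaTFrom f conv hts q).elim fun p => ⟨.orl p⟩
  | _, _, _, _, hts, .orr q => (alphaTFrom f conv hts q).elim fun p => ⟨.orr p⟩
  | _, _, _, _, hts, .all qs =>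
      ⟨.all fun n => Classical.choice (alphaTFrom f conv hts (qs n))⟩
  | _, _, _, _, hts, .ex n q => (alphaTFrom f conv hts q).elim fun p => ⟨.ex n p⟩
end
theorem liftTest_mono {A : Type u} {P : A → Type w} {Q : A → Type w₂}
    (hc : ∀ a, P a → Nonempty (Q a)) :
    ∀ s : Test A, liftTest P s → Nonempty (liftTest Q s)
  | .atom a, p => hc a p
  | .tru, _ => ⟨PUnit.unit⟩
  | .fls, p => p.elim
  | .and t₁ t₂, p =>
      (liftTest_mono hc t₁ p.1).elim fun q₁ =>
        (liftTest_mono hc t₂ p.2).elim fun q₂ => ⟨q₁, q₂⟩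
  | .or t₁ _, Sum.inl p => (liftTest_mono hc t₁ p).elim fun q => ⟨Sum.inl q⟩
  | .or _ t₂, Sum.inr p => (liftTest_mono hc t₂ p).elim fun q => ⟨Sum.inr q⟩
  | .all ts, p => ⟨fun n => Classical.choice (liftTest_mono hc (ts n) (p n))⟩
  | .ex ts, ⟨n, p⟩ => (liftTest_mono hc (ts n) p).elim fun q => ⟨⟨n, q⟩⟩

theorem liftTest_map {A B : Type} (g : A → B) (Q : B → Type w₂) :
    ∀ s : Test A, liftTest Q (mapTest g s) = liftTest (fun a => Q (g a)) s
  | .atom a => rfl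
  | .tru => rfl
  | .fls => rfl
  | .and t₁ t₂ => by
      simp only [mapTest, liftTest]
      rw [liftTest_map g Q t₁, liftTest_map g Q t₂]
  | .or t₁ t₂ => by
      simp only [mapTest, liftTest]
      rw [liftTest_map g Q t₁, liftTest_map g Q t₂]
  | .all ts => by
      simp only [mapTest, liftTest]
      exact congrArg (fun F => (n : ℕ) → F n) (funext fun n => liftTest_map g Q (ts n))
  | .ex ts => by
      simp only [mapTest, liftTest]
      exact congrArg (fun F => (n : ℕ) × F n) (funext fun n => liftTest_map g Q (ts n))

theorem satTest_eq {πl : O → Bool} {πn : (k : K) → O → Test (I k × O)}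
    {b : Srt} {σ : Ty} (P : Tm K I b σ) :
    ∀ s : Test (Form K I O b σ),
      SatTest πl πn (toFTest s) P = liftTest (fun ψ => Sat πl πn ψ P) s
  | .atom φ => rfl
  | .tru => rfl
  | .fls => rfl
  | .and t₁ t₂ => by
      simp only [toFTest, SatTest, liftTest]
      rw [satTest_eq P t₁, satTest_eq P t₂]
  | .or t₁ t₂ => by
      simp only [toFTest, SatTest, liftTest]
      rw [satTest_eq P t₁, satTest_eq P t₂]
  | .all ts => by
      simp only [toFTest, SatTest, liftTest]
      exact congrArg (fun F => (n : ℕ) → F n) (funext fun n => satTest_eq P (ts n))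
  | .ex ts => by
      simp only [toFTest, SatTest, liftTest]
      exact congrArg (fun F => (n : ℕ) × F n) (funext fun n => satTest_eq P (ts n))
end AuxProof
/-- if `πd` is an `α`-decomposition then `μ M ⊨ obs_α o φ`
iff `M ⊨ (πd o)_α[φ]`. -/
theorem alpha_decomposition_sat
    {K : Type} {I : K → Type} {O : Type}
    (πl : O → Bool) (πn : (k : K) → O → Test (I k × O))
    (πd : O → Test (O × O)) (h : IsAlphaDecomposition πl πn πd)
    {τ : Ty} (φ : Form K I O .val τ) (M : Tm K I .cpt (.u τ)) (o : O) :
    Nonempty ((Sat πl πn (.obsA o φ) (CTree.mu M) → Sat πl πn (decompFormA πd o φ) M) ×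
      (Sat πl πn (decompFormA πd o φ) M → Sat πl πn (.obsA o φ) (CTree.mu M))) := by
  classical
  set Sφ : Val K I τ → Type := fun V => Sat πl πn φ V with hSφ
  set g : O × O → Form K I O .cpt (.u τ) :=
    fun p => .obsA p.1 (.thunk (.obsA p.2 φ)) with hg
  set d : CTree K I (CTree K I Type) :=
    cmap (cmap Sφ) (M : CTree K I (CTree K I (Val K I τ))) with hd
  have E : SatTest πl πn (toFTest (mapTest g (πd o))) M
      = liftTest (fun p => Sat πl πn (g p) M) (πd o) :=
    (satTest_eq M _).trans (liftTest_map g _ _)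
  refine ⟨⟨fun hsat => ?_, fun hsat => ?_⟩⟩
  · -- forward
    have a1 : Alpha πl πn Sφ o (CTree.mu M) := hsat
    have h2 : Nonempty (Alpha πl πn (fun X : Type => X) o (cmap Sφ (CTree.mu M))) :=
      alphaTo Sφ (Q := fun X : Type => X) (fun _ p => ⟨p⟩) a1
    erw [← mu_cmap] at h2
    have h3 : Nonempty (liftTest (fun p => liftTree πl πn p.1 (algA πl πn p.2) d) (πd o)) :=
      h2.elim fun x => ⟨(h d o).1 x⟩
    have h4 : Nonempty (liftTest (fun p => Sat πl πn (g p) M) (πd o)) :=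
      h3.elim fun x =>
        liftTest_mono
          (P := fun p : O × O => liftTree πl πn p.1 (algA πl πn p.2) d)
          (Q := fun p : O × O => Sat πl πn (g p) M)
          (fun p q =>
            alphaFrom (cmap Sφ) (P := fun N => Alpha πl πn Sφ p.2 N) (Q := algA πl πn p.2)
              (fun N y =>
                alphaFrom Sφ (P := Sφ) (Q := fun X : Type => X) (fun _ z => ⟨z⟩) rfl
                  (show Alpha πl πn (fun X : Type => X) p.2 (cmap Sφ N) from y))
              hd q)
          (πd o) x
    show SatTest πl πn (toFTest (mapTest g (πd o))) M
    exact cast E.symm (Classical.choice h4)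
  · -- backward
    have h4 : liftTest (fun p => Sat πl πn (g p) M) (πd o) :=
      cast E (show SatTest πl πn (toFTest (mapTest g (πd o))) M from hsat)
    have h3 : Nonempty (liftTest (fun p => liftTree πl πn p.1 (algA πl πn p.2) d) (πd o)) :=
      liftTest_mono
        (P := fun p : O × O => Sat πl πn (g p) M)
        (Q := fun p : O × O => liftTree πl πn p.1 (algA πl πn p.2) d)
        (fun p q => by
          have q' : Alpha πl πn (fun N => Alpha πl πn Sφ p.2 N) p.1 M := q
          have r :=
            alphaTo (cmap Sφ) (P := fun N => Alpha πl πn Sφ p.2 N) (Q := algA πl πn p.2)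
              (fun N x =>
                (alphaTo Sφ (P := Sφ) (Q := fun X : Type => X) (fun _ z => ⟨z⟩) x).elim
                  fun y => ⟨show algA πl πn p.2 (cmap Sφ N) from y⟩)
              q'
          rw [← hd] at r
          exact r)
        (πd o) h4
    have h2 : Nonempty (Alpha πl πn (fun X : Type => X) o (CTree.mu d)) :=
      h3.elim fun x => ⟨(h d o).2 x⟩
    erw [hd, mu_cmap] at h2
    have h1 : Nonempty (Alpha πl πn Sφ o (CTree.mu M)) :=
      h2.elim fun x =>
        alphaFrom Sφ (P := Sφ) (Q := fun X : Type => X) (fun _ z => ⟨z⟩) rfl x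
    exact Classical.choice h1
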